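/- arXiv:1702.08799 — 2 statements merged into one kernel-verified Lean document; each statement's English description precedes it below -/
import Mathlib

section
/- With F : D × S^n → hat-H^{2,n} as in the warped product parametrization, the pullback by F of the pseudo-Riemannian metric induced by q equals (4/(1-||u||^2)^2) g_D ⊕ -((1+||u||^2)/(1-||u||^2))^2 g_{S^n}, where g_D is the flat Euclidean metric on the disc and g_{S^n} the round metric of curvature 1 on S^n. -/
open scoped RealInnerProductSpace
open ContinuousLinearMap
set_option maxHeartbeats 1000000

/-- The warped product parametrization `F(u,v) = ((2/(1-‖u‖²)) u, ((1+‖u‖²)/(1-‖u‖²)) v)`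
of the quadric `{q = -1}` in `ℝ^{2,n+1} = ℝ² ⊕ ℝ^{n+1}` (with
`q(a,b) = ‖a‖² - ‖b‖²`). -/
noncomputable def warpF (n : ℕ)
    (p : EuclideanSpace ℝ (Fin 2) × EuclideanSpace ℝ (Fin (n + 1))) :
    EuclideanSpace ℝ (Fin 2) × EuclideanSpace ℝ (Fin (n + 1)) :=
  ((2 / (1 - ‖p.1‖ ^ 2)) • p.1, ((1 + ‖p.1‖ ^ 2) / (1 - ‖p.1‖ ^ 2)) • p.2)

/-- The pullback by `F` of the pseudo-Riemannian metric `q(a,b) = ‖a‖² - ‖b‖²` (restricted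
to the quadric `{q = -1}`) is the warped product metric
`(4/(1-‖u‖²)²) g_D ⊕ -((1+‖u‖²)/(1-‖u‖²))² g_{Sⁿ}`: for `u ∈ D`, `v ∈ Sⁿ` and any
tangent vector `(a,b)` (with `b` tangent to the sphere at `v`), the value of the ambient
form on `dF_{(u,v)}(a,b)` is `4/(1-‖u‖²)² ‖a‖² - ((1+‖u‖²)/(1-‖u‖²))² ‖b‖²`. -/
theorem warpF_pullback_metric (n : ℕ)
    (u a : EuclideanSpace ℝ (Fin 2)) (v b : EuclideanSpace ℝ (Fin (n + 1)))
    (hu : ‖u‖ < 1) (hv : ‖v‖ = 1) (hb : ⟪v, b⟫ = 0) :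
    ‖(fderiv ℝ (warpF n) (u, v) (a, b)).1‖ ^ 2
      - ‖(fderiv ℝ (warpF n) (u, v) (a, b)).2‖ ^ 2
      = 4 / (1 - ‖u‖ ^ 2) ^ 2 * ‖a‖ ^ 2
        - ((1 + ‖u‖ ^ 2) / (1 - ‖u‖ ^ 2)) ^ 2 * ‖b‖ ^ 2 := by
  have hr : ‖u‖ ^ 2 < 1 := by nlinarith [norm_nonneg u]
  have hne : 1 - ‖u‖ ^ 2 ≠ 0 := by nlinarith
  -- derivative of p ↦ ‖p.1‖²
  have hn : HasFDerivAt (fun p : (EuclideanSpace ℝ (Fin 2) × EuclideanSpace ℝ (Fin (n + 1))) => ‖p.1‖ ^ 2)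
      (2 • (innerSL ℝ u).comp (ContinuousLinearMap.fst ℝ _ _)) (u, v) :=
    (hasFDerivAt_fst (p := (u, v))).norm_sq
  -- derivative of p ↦ (1 - ‖p.1‖²)
  have hg := (hasFDerivAt_const (1:ℝ) ((u,v) : EuclideanSpace ℝ (Fin 2) × EuclideanSpace ℝ (Fin (n + 1)))).sub hn
  have hinv := (hasFDerivAt_inv (x := 1 - ‖u‖ ^ 2) hne).comp (u, v) hg
  have hc1 := hinv.const_mul (2:ℝ)
  have hc2 := (hn.const_add (1:ℝ)).mul hinv
  have h1 := hc1.smul (hasFDerivAt_fst (p := ((u,v) : EuclideanSpace ℝ (Fin 2) × EuclideanSpace ℝ (Fin (n + 1)))))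
  have h2 := hc2.smul (hasFDerivAt_snd (p := ((u,v) : EuclideanSpace ℝ (Fin 2) × EuclideanSpace ℝ (Fin (n + 1)))))
  have hF := h1.prodMk h2
  simp only [Function.comp_def] at hF
  unfold warpF
  simp only [div_eq_mul_inv]
  rw [HasFDerivAt.fderiv (f := fun p : EuclideanSpace ℝ (Fin 2) × EuclideanSpace ℝ (Fin (n + 1)) => ((2 * (1 - ‖p.1‖ ^ 2)⁻¹) • p.1, ((1 + ‖p.1‖ ^ 2) * (1 - ‖p.1‖ ^ 2)⁻¹) • p.2)) hF]
  simp only [ContinuousLinearMap.prod_apply, ContinuousLinearMap.add_apply,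
    ContinuousLinearMap.smul_apply, ContinuousLinearMap.coe_comp', Function.comp_apply,
    ContinuousLinearMap.coe_fst', ContinuousLinearMap.coe_snd', innerSL_apply_apply,
    ContinuousLinearMap.smulRight_apply, ContinuousLinearMap.one_apply,
    ContinuousLinearMap.sub_apply, ContinuousLinearMap.zero_apply, smul_eq_mul,
    ContinuousLinearMap.coe_smul', Pi.smul_apply, Pi.sub_apply, Pi.mul_apply,
    ContinuousLinearMap.toSpanSingleton_apply]
  have hbv : ⟪b, v⟫ = 0 := by rw [real_inner_comm]; exact hb
  have hvv : ⟪v, v⟫ = (1 : ℝ) := by rw [real_inner_self_eq_norm_sq, hv]; norm_num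
  have hau : ⟪a, u⟫ = ⟪u, a⟫ := real_inner_comm u a
  simp only [← real_inner_self_eq_norm_sq]
  simp only [inner_add_left, inner_add_right, real_inner_smul_left, real_inner_smul_right,
    hb, hbv, hvv, hau, nsmul_eq_mul, Nat.cast_ofNat]
  have h1u : (1 : ℝ) - ⟪u, u⟫ ≠ 0 := by
    rw [real_inner_self_eq_norm_sq]; exact hne
  set r := (⟪u, u⟫ : ℝ) with hrdef
  set s := (⟪u, a⟫ : ℝ) with hsdef
  set A := (⟪a, a⟫ : ℝ) with hAdef
  set B := (⟪b, b⟫ : ℝ) with hBdef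
  field_simp
  ring
end

section
/- Let γ ∈ SO_0(2,n+1) admit isotropic vectors e_+, e_- with ⟨e_+,e_-⟩ = 1, γ·e_+ = λ e_+, γ·e_- = λ^{-1} e_- for some λ > 1, and suppose the restriction of γ to V = (span(e_+,e_-))^⊥ has spectral radius strictly less than λ. Let v = α(e_- + e_+) + w with α ≠ 0, w ∈ V, and q(v) = -1. Then (1/k) arcosh|⟨v, γ^k · v⟩| → log λ as k → ∞. -/
/-- Sign of the `i`-th coordinate in the quadratic form of signature `(2, m-2)`:
`q(x) = x₀² + x₁² - x₂² - ⋯`. -/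
noncomputable def qsgn {m : ℕ} (i : Fin m) : ℝ := if (i : ℕ) < 2 then 1 else -1

/-- The symmetric bilinear form associated to `q`. -/
noncomputable def Bq {m : ℕ} (u v : Fin m → ℝ) : ℝ := ∑ i, qsgn i * u i * v i

/-- The quadratic form `q` of signature `(2, m-2)`. -/
noncomputable def Qq {m : ℕ} (u : Fin m → ℝ) : ℝ := Bq u u

/-- The inverse hyperbolic cosine. -/
noncomputable def arcosh (x : ℝ) : ℝ := Real.log (x + Real.sqrt (x ^ 2 - 1))

lemma Bq_comm {m} (u v : Fin m → ℝ) : Bq u v = Bq v u :=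
  Finset.sum_congr rfl (fun i _ => by ring)
lemma Bq_add_right {m} (u v w : Fin m → ℝ) : Bq u (v + w) = Bq u v + Bq u w := by
  simp [Bq, mul_add, Finset.sum_add_distrib]
lemma Bq_smul_right {m} (c : ℝ) (u v : Fin m → ℝ) : Bq u (c • v) = c * Bq u v := by
  simp only [Bq, Finset.mul_sum]
  exact Finset.sum_congr rfl (fun i _ => by simp [mul_comm, mul_left_comm])
lemma Bq_add_left {m} (u v w : Fin m → ℝ) : Bq (u + v) w = Bq u w + Bq v w := by
  rw [Bq_comm, Bq_add_right, Bq_comm w u, Bq_comm w v]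
lemma Bq_smul_left {m} (c : ℝ) (u v : Fin m → ℝ) : Bq (c • u) v = c * Bq u v := by
  rw [Bq_comm, Bq_smul_right, Bq_comm]
lemma Bq_abs_le {m : ℕ} (u v : Fin m → ℝ) : |Bq u v| ≤ m * ‖u‖ * ‖v‖ := by
  calc |Bq u v| ≤ ∑ i, |qsgn i * u i * v i| := Finset.abs_sum_le_sum_abs _ _
    _ ≤ ∑ _i : Fin m, ‖u‖ * ‖v‖ := by
        apply Finset.sum_le_sum
        intro i _
        rw [abs_mul, abs_mul]
        have : |qsgn i| = 1 := by unfold qsgn; split <;> simp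
        rw [this, one_mul]
        exact mul_le_mul (norm_le_pi_norm u i) (norm_le_pi_norm v i) (abs_nonneg _) (norm_nonneg _)
    _ = m * ‖u‖ * ‖v‖ := by simp [mul_assoc]

lemma arcosh_ge_log {x : ℝ} (hx : 1 ≤ x) : Real.log x ≤ arcosh x := by
  unfold arcosh
  apply Real.log_le_log (by linarith)
  nlinarith [Real.sqrt_nonneg (x ^ 2 - 1)]

lemma arcosh_le_log {x : ℝ} (hx : 1 ≤ x) : arcosh x ≤ Real.log 2 + Real.log x := by
  unfold arcosh
  rw [← Real.log_mul two_ne_zero (by linarith)]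
  apply Real.log_le_log (by nlinarith [Real.sqrt_nonneg (x ^ 2 - 1)])
  have h1 : Real.sqrt (x ^ 2 - 1) ≤ x := by
    have h2 : Real.sqrt (x ^ 2 - 1) ≤ Real.sqrt (x ^ 2) := Real.sqrt_le_sqrt (by nlinarith)
    rwa [Real.sqrt_sq (by linarith)] at h2
  linarith


set_option maxHeartbeats 1600000 in
/-- Let `g ∈ SO₀(2,n+1)` be proximal, with isotropic eigenvectors `ep, em`
(`⟨ep,em⟩ = 1`, eigenvalues `l > 1` and `l⁻¹`) and spectral radius `< l` on the
orthogonal `V` of the span of `ep, em`.  For `v = α(em+ep)+w` with `α ≠ 0`, `w ∈ V`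
and `q(v) = -1`, the normalized space-like distances `(1/k) arcosh |⟨v, gᵏ v⟩|`
converge to `log l`. -/
theorem translation_length_of_proximal (n : ℕ)
    (g : Module.End ℝ (Fin (n + 3) → ℝ)) (ep em w : Fin (n + 3) → ℝ)
    (l α : ℝ) (hl : 1 < l) (hα : α ≠ 0)
    (hiso : ∀ x y, Bq (g x) (g y) = Bq x y)
    (hep : Qq ep = 0) (hem : Qq em = 0) (hpair : Bq ep em = 1)
    (hgep : g ep = l • ep) (hgem : g em = l⁻¹ • em)
    (hV : ∃ μ C : ℝ, μ < l ∧ 0 ≤ C ∧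
      ∀ x : Fin (n + 3) → ℝ, Bq ep x = 0 → Bq em x = 0 →
        ∀ k : ℕ, ‖(g ^ k) x‖ ≤ C * μ ^ k * ‖x‖)
    (hwp : Bq ep w = 0) (hwm : Bq em w = 0)
    (v : Fin (n + 3) → ℝ) (hv : v = α • (em + ep) + w) (hqv : Qq v = -1) :
    Filter.Tendsto (fun k : ℕ => (1 / (k : ℝ)) * arcosh |Bq v ((g ^ k) v)|)
      Filter.atTop (nhds (Real.log l)) := by
  have hl0 : l ≠ 0 := by positivity
  have hlpos : (0:ℝ) < l := by linarith
  -- algebraic identity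
  have hgkep : ∀ k : ℕ, (g ^ k) ep = l ^ k • ep := by
    intro k; induction k with
    | zero => simp
    | succ k ih =>
      rw [pow_succ, Module.End.mul_apply, hgep, map_smul, ih, smul_smul, pow_succ]; ring_nf
  have hgkem : ∀ k : ℕ, (g ^ k) em = (l⁻¹) ^ k • em := by
    intro k; induction k with
    | zero => simp
    | succ k ih =>
      rw [pow_succ, Module.End.mul_apply, hgem, map_smul, ih, smul_smul, pow_succ]; ring_nf
  have hisok : ∀ (k : ℕ) x y, Bq ((g ^ k) x) ((g ^ k) y) = Bq x y := by
    intro k; induction k with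
    | zero => simp
    | succ k ih =>
      intro x y
      rw [pow_succ, Module.End.mul_apply, Module.End.mul_apply, ih, hiso]
  have hemw : ∀ k : ℕ, Bq em ((g ^ k) w) = 0 := by
    intro k
    have h1 : (g ^ k) (l ^ k • em) = em := by
      rw [map_smul, hgkem, smul_smul, ← mul_pow, mul_inv_cancel₀ hl0, one_pow, one_smul]
    calc Bq em ((g ^ k) w) = Bq ((g ^ k) (l ^ k • em)) ((g ^ k) w) := by rw [h1]
      _ = Bq (l ^ k • em) w := hisok k _ _
      _ = l ^ k * Bq em w := Bq_smul_left _ _ _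
      _ = 0 := by rw [hwm, mul_zero]
  have hepw : ∀ k : ℕ, Bq ep ((g ^ k) w) = 0 := by
    intro k
    have h1 : (g ^ k) ((l⁻¹) ^ k • ep) = ep := by
      rw [map_smul, hgkep, smul_smul, ← mul_pow, inv_mul_cancel₀ hl0, one_pow, one_smul]
    calc Bq ep ((g ^ k) w) = Bq ((g ^ k) ((l⁻¹) ^ k • ep)) ((g ^ k) w) := by rw [h1]
      _ = Bq ((l⁻¹) ^ k • ep) w := hisok k _ _
      _ = (l⁻¹) ^ k * Bq ep w := Bq_smul_left _ _ _
      _ = 0 := by rw [hwp, mul_zero]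
  have hkey : ∀ k : ℕ, Bq v ((g ^ k) v)
      = α ^ 2 * (l ^ k + (l⁻¹) ^ k) + Bq w ((g ^ k) w) := by
    intro k
    have hgv : (g ^ k) v = α • ((l⁻¹) ^ k • em + l ^ k • ep) + (g ^ k) w := by
      rw [hv, map_add, map_smul, map_add, hgkem, hgkep]
    rw [hgv, hv]
    have hme : Bq em ep = 1 := by rw [Bq_comm]; exact hpair
    have hwe : Bq w em = 0 := by rw [Bq_comm]; exact hwm
    have hwep : Bq w ep = 0 := by rw [Bq_comm]; exact hwp
    have hee : Bq em em = 0 := hem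
    have hpp : Bq ep ep = 0 := hep
    simp only [Bq_add_left, Bq_add_right, Bq_smul_left, Bq_smul_right,
      hee, hpp, hme, hpair, hwe, hwep, hwm, hwp, hemw, hepw]
    ring
  -- bound on the remainder term
  obtain ⟨μ₀, D, hμ₀0, hμ₀l, hD0, hDb⟩ :
      ∃ μ₀ D : ℝ, 0 ≤ μ₀ ∧ μ₀ < l ∧ 0 ≤ D ∧
        ∀ k : ℕ, |Bq w ((g ^ k) w)| ≤ D * μ₀ ^ k := by
    obtain ⟨μ, C, hμl, hC, hbound⟩ := hV
    rcases le_or_gt 0 μ with hμ | hμ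
    · refine ⟨μ, (n + 3 : ℝ) * C * ‖w‖ ^ 2, hμ, hμl, by positivity, fun k => ?_⟩
      calc |Bq w ((g ^ k) w)| ≤ (n + 3 : ℝ) * ‖w‖ * ‖(g ^ k) w‖ := by
            have := Bq_abs_le w ((g ^ k) w); push_cast at this ⊢; linarith
        _ ≤ (n + 3 : ℝ) * ‖w‖ * (C * μ ^ k * ‖w‖) := by
            apply mul_le_mul_of_nonneg_left (hbound w hwp hwm k) (by positivity)
        _ = (n + 3 : ℝ) * C * ‖w‖ ^ 2 * μ ^ k := by ring
    · have hw0 : w = 0 := by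
        have h1 := hbound w hwp hwm 1
        have h0 := hbound w hwp hwm 0
        simp only [pow_one, pow_zero, mul_one, Module.End.one_apply] at h1 h0
        have hgw : (0:ℝ) ≤ ‖g w‖ := norm_nonneg _
        have hwn : (0:ℝ) ≤ ‖w‖ := norm_nonneg _
        by_contra hne
        have hwpos : (0:ℝ) < ‖w‖ := lt_of_le_of_ne hwn (fun h => hne (norm_eq_zero.mp h.symm))
        have hC1 : 1 ≤ C := by nlinarith
        nlinarith [mul_pos hwpos (neg_pos.mpr hμ)]
      refine ⟨0, 0, le_refl _, by linarith, le_refl _, fun k => ?_⟩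
      rw [hw0]
      simp [Bq]
  set A := α ^ 2 with hA
  have hApos : 0 < A := by positivity
  set E := 2 * A + D with hE
  have hEpos : 0 < E := by positivity
  have hinvle : l⁻¹ ≤ l := by
    have h10 : l⁻¹ ≤ 1 := by
      rw [inv_le_one_iff₀]; right; exact hl.le
    linarith
  -- upper bound, all k
  have hub : ∀ k : ℕ, |Bq v ((g ^ k) v)| ≤ E * l ^ k := by
    intro k
    have h1 : (l⁻¹) ^ k ≤ l ^ k := pow_le_pow_left₀ (by positivity) hinvle k
    have h2 : μ₀ ^ k ≤ l ^ k := pow_le_pow_left₀ hμ₀0 hμ₀l.le k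
    have h3 := hDb k
    have hnn : (0:ℝ) ≤ A * (l ^ k + (l⁻¹) ^ k) := by positivity
    have h4 : |Bq v ((g ^ k) v)| ≤ A * (l ^ k + (l⁻¹) ^ k) + |Bq w ((g ^ k) w)| := by
      rw [hkey k]
      calc |A * (l ^ k + (l⁻¹) ^ k) + Bq w ((g ^ k) w)|
          ≤ |A * (l ^ k + (l⁻¹) ^ k)| + |Bq w ((g ^ k) w)| := abs_add_le _ _
        _ = A * (l ^ k + (l⁻¹) ^ k) + |Bq w ((g ^ k) w)| := by rw [abs_of_nonneg hnn]
    have h5 : D * μ₀ ^ k ≤ D * l ^ k := mul_le_mul_of_nonneg_left h2 hD0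
    calc |Bq v ((g ^ k) v)| ≤ A * (l ^ k + (l⁻¹) ^ k) + D * μ₀ ^ k := by linarith
      _ ≤ A * l ^ k + A * l ^ k + D * l ^ k := by nlinarith
      _ = E * l ^ k := by rw [hE]; ring
  -- lower bound, eventually
  have hratio : Filter.Tendsto (fun k : ℕ => D * (μ₀ / l) ^ k) Filter.atTop (nhds 0) := by
    have h := tendsto_pow_atTop_nhds_zero_of_lt_one (show (0:ℝ) ≤ μ₀ / l by positivity)
      (by rw [div_lt_one hlpos]; exact hμ₀l)
    simpa using h.const_mul D
  have hev1 : ∀ᶠ k : ℕ in Filter.atTop, D * μ₀ ^ k ≤ (A / 2) * l ^ k := by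
    filter_upwards [hratio.eventually_le_const (show (0:ℝ) < A / 2 by positivity)] with k hk
    have hlk : (0:ℝ) < l ^ k := by positivity
    have h1 : D * (μ₀ / l) ^ k * l ^ k ≤ (A / 2) * l ^ k :=
      mul_le_mul_of_nonneg_right hk (by positivity)
    rw [div_pow] at h1
    calc D * μ₀ ^ k = D * (μ₀ ^ k / l ^ k) * l ^ k := by
          rw [mul_assoc, div_mul_cancel₀ _ (ne_of_gt hlk)]
      _ ≤ (A / 2) * l ^ k := h1
  have hev2 : ∀ᶠ k : ℕ in Filter.atTop, (1:ℝ) ≤ (A / 2) * l ^ k := by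
    have hlim := tendsto_pow_atTop_atTop_of_one_lt hl
    filter_upwards [hlim.eventually_ge_atTop (2 / A)] with k hk
    rw [div_le_iff₀ hApos] at hk
    nlinarith
  have hlb : ∀ᶠ k : ℕ in Filter.atTop, (A / 2) * l ^ k ≤ Bq v ((g ^ k) v) := by
    filter_upwards [hev1] with k hk
    have h3 : -(D * μ₀ ^ k) ≤ Bq w ((g ^ k) w) := neg_le_of_abs_le (hDb k)
    rw [hkey k]
    have hinv : (0:ℝ) ≤ (l⁻¹) ^ k := by positivity
    nlinarith
  -- squeeze
  have hlo : Filter.Tendsto (fun k : ℕ => (1 / (k:ℝ)) * Real.log (A / 2) + Real.log l)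
      Filter.atTop (nhds (Real.log l)) := by
    have h := (tendsto_one_div_atTop_nhds_zero_nat.mul_const (Real.log (A / 2))).add_const
      (Real.log l)
    rw [show (0:ℝ) * Real.log (A / 2) + Real.log l = Real.log l by rw [zero_mul, zero_add]] at h
    exact h
  have hhi : Filter.Tendsto (fun k : ℕ => (1 / (k:ℝ)) * Real.log (2 * E) + Real.log l)
      Filter.atTop (nhds (Real.log l)) := by
    have h := (tendsto_one_div_atTop_nhds_zero_nat.mul_const (Real.log (2 * E))).add_const
      (Real.log l)
    rw [show (0:ℝ) * Real.log (2 * E) + Real.log l = Real.log l by rw [zero_mul, zero_add]] at h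
    exact h
  apply tendsto_of_tendsto_of_tendsto_of_le_of_le' hlo hhi
  · -- lower
    filter_upwards [hlb, hev2, Filter.eventually_ge_atTop 1] with k hk h1 hk1
    have hkpos : (0:ℝ) < k := by exact_mod_cast hk1
    have hsk1 : (1:ℝ) ≤ Bq v ((g ^ k) v) := le_trans h1 hk
    have habs : |Bq v ((g ^ k) v)| = Bq v ((g ^ k) v) :=
      abs_of_nonneg (by linarith)
    rw [habs]
    have hA2 : (A / 2 : ℝ) ≠ 0 := ne_of_gt (by positivity)
    have hlkne : (l : ℝ) ^ k ≠ 0 := ne_of_gt (by positivity)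
    have h2 : Real.log ((A / 2) * l ^ k) ≤ Real.log (Bq v ((g ^ k) v)) :=
      Real.log_le_log (by positivity) hk
    have h4 : Real.log ((A / 2) * l ^ k) = Real.log (A / 2) + (k:ℝ) * Real.log l := by
      rw [Real.log_mul hA2 hlkne, Real.log_pow]
    have h5 : Real.log (A / 2) + (k:ℝ) * Real.log l ≤ arcosh (Bq v ((g ^ k) v)) := by
      have := arcosh_ge_log hsk1
      linarith
    calc (1 / (k:ℝ)) * Real.log (A / 2) + Real.log l
        = (1 / (k:ℝ)) * (Real.log (A / 2) + (k:ℝ) * Real.log l) := by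
          rw [mul_add, ← mul_assoc, one_div_mul_cancel (ne_of_gt hkpos), one_mul]
      _ ≤ (1 / (k:ℝ)) * arcosh (Bq v ((g ^ k) v)) :=
          mul_le_mul_of_nonneg_left h5 (by positivity)
  · -- upper
    filter_upwards [hlb, hev2, Filter.eventually_ge_atTop 1] with k hk h1 hk1
    have hkpos : (0:ℝ) < k := by exact_mod_cast hk1
    have hsk1 : (1:ℝ) ≤ Bq v ((g ^ k) v) := le_trans h1 hk
    have habs : |Bq v ((g ^ k) v)| = Bq v ((g ^ k) v) :=
      abs_of_nonneg (by linarith)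
    rw [habs]
    have hlkne : (l : ℝ) ^ k ≠ 0 := ne_of_gt (by positivity)
    have h2 : Real.log (Bq v ((g ^ k) v)) ≤ Real.log (E * l ^ k) := by
      apply Real.log_le_log (by linarith)
      calc Bq v ((g ^ k) v) ≤ |Bq v ((g ^ k) v)| := le_abs_self _
        _ ≤ E * l ^ k := hub k
    have h4 : Real.log (E * l ^ k) = Real.log E + (k:ℝ) * Real.log l := by
      rw [Real.log_mul (ne_of_gt hEpos) hlkne, Real.log_pow]
    have h5 : arcosh (Bq v ((g ^ k) v)) ≤ Real.log (2 * E) + (k:ℝ) * Real.log l := by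
      have h6 := arcosh_le_log hsk1
      rw [Real.log_mul two_ne_zero (ne_of_gt hEpos)]
      linarith
    calc (1 / (k:ℝ)) * arcosh (Bq v ((g ^ k) v))
        ≤ (1 / (k:ℝ)) * (Real.log (2 * E) + (k:ℝ) * Real.log l) :=
          mul_le_mul_of_nonneg_left h5 (by positivity)
      _ = (1 / (k:ℝ)) * Real.log (2 * E) + Real.log l := by
          rw [mul_add, ← mul_assoc, one_div_mul_cancel (ne_of_gt hkpos), one_mul]
end
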